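/- Let 1 < p, q < ∞, let u, v be weights with v > 0 almost everywhere, and set w = v^{−p'/p}. Suppose there is a constant C such that for every bounded measurable set E ⊆ ℝⁿ, every μ ∈ ℝⁿ with −μ ∈ E, and every τ ∈ ℝⁿ: u((E+μ)° + τ)^{1/q} · w(E)^{1/p'} ≤ C and u(E)^{1/q} · w((E+μ)° + τ)^{1/p'} ≤ C. Then for every such E, μ, τ: (∫_{(E+μ)°+τ} |f̂(z)|^q u(z) dz)^{1/q} ≤ C (∫_E |f(x)|^p v(x) dx)^{1/p} for every f ∈ L¹(ℝⁿ) vanishing almost everywhere outside E, and (∫_E |ĝ(z)|^q u(z) dz)^{1/q} ≤ C (∫ |g(x)|^p v(x) dx)^{1/p} for every g ∈ L¹(ℝⁿ) vanishing almost everywhere outside (E+μ)° + τ. -/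

import Mathlib

open MeasureTheory ENNReal Set Bornology Pointwise

noncomputable section

abbrev Euc (n : ℕ) := EuclideanSpace ℝ (Fin n)

/-- The Fourier transform `f̂(z) = ∫ f(x) e^{-i x·z} dx`. -/
def ftrans {n : ℕ} (f : Euc n → ℂ) (z : Euc n) : ℂ :=
  ∫ x : Euc n, f x * Complex.exp (-(Complex.I * ((inner ℝ x z : ℝ) : ℂ)))

/-- A weight: nonnegative, measurable, locally integrable. -/
def IsWeight {n : ℕ} (u : Euc n → ℝ) : Prop :=
  Measurable u ∧ (∀ x, 0 ≤ u x) ∧ LocallyIntegrable u volume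

/-- `u(A) = ∫_A u`, as a value in `ℝ≥0∞`. -/
def wMeas {n : ℕ} (u : Euc n → ℝ) (A : Set (Euc n)) : ℝ≥0∞ :=
  ∫⁻ x in A, ENNReal.ofReal (u x)

/-- The polarSet of a set: `E° = {z : |x·z| ≤ 1 for all x ∈ E}`. -/
def polarSet {n : ℕ} (E : Set (Euc n)) : Set (Euc n) :=
  {z | ∀ x ∈ E, |(inner ℝ x z : ℝ)| ≤ 1}

/-- The setTranslate `E + τ` of a set. -/
def setTranslate {n : ℕ} (τ : Euc n) (E : Set (Euc n)) : Set (Euc n) :=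
  (fun x => x + τ) '' E

/-- Conjugate exponent `p' = p/(p-1)`. -/
def rconj (p : ℝ) : ℝ := p / (p - 1)

/-- The weight `w = v^{-p'/p}`. -/
def wFun {n : ℕ} (p : ℝ) (v : Euc n → ℝ) : Euc n → ℝ :=
  fun x => v x ^ (-(rconj p) / p)

/-- The weighted Fourier inequality class `Fourier(p,q)`. -/
def FourierPQ {n : ℕ} (p q : ℝ) (u v : Euc n → ℝ) : Prop :=
  ∃ C : ℝ, 0 < C ∧ ∀ f : Euc n → ℂ, Integrable f →
    (∫⁻ z, (‖ftrans f z‖₊ : ℝ≥0∞) ^ q * ENNReal.ofReal (u z)) ^ (1/q) ≤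
      ENNReal.ofReal C * (∫⁻ x, (‖f x‖₊ : ℝ≥0∞) ^ p * ENNReal.ofReal (v x)) ^ (1/p)

/-- Axis-parallel cube with center `c` and half-side `r`. -/
def axisCube {n : ℕ} (c : Euc n) (r : ℝ) : Set (Euc n) :=
  {x | ∀ i, |x i - c i| ≤ r}

/-- An axis-parallel cube. -/
def IsCube {n : ℕ} (Q : Set (Euc n)) : Prop :=
  ∃ (c : Euc n) (r : ℝ), 0 < r ∧ Q = axisCube c r

/-- Comparability of measures: `(μ₁,μ₂) ∈ C(δ)`. -/
def Compar {n : ℕ} (μ₁ μ₂ : Measure (Euc n)) (δ : ℝ) : Prop :=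
  ∃ C : ℝ, 0 < C ∧ ∀ Q : Set (Euc n), IsCube Q → ∀ E ⊆ Q, MeasurableSet E →
    μ₁ E * μ₂ Q ^ δ ≤ ENNReal.ofReal C * (μ₁ Q * μ₂ E ^ δ)

/-- A doubling measure. -/
def Doubling {n : ℕ} (μ : Measure (Euc n)) : Prop :=
  ∃ C : ℝ, 0 < C ∧ ∀ (c : Euc n) (r : ℝ), 0 < r →
    μ (axisCube c (2 * r)) ≤ ENNReal.ofReal C * μ (axisCube c r)

/-- `(u, |·|) ∈ C(δ)`. -/
def ComparWL {n : ℕ} (u : Euc n → ℝ) (δ : ℝ) : Prop :=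
  ∃ C : ℝ, 0 < C ∧ ∀ Q : Set (Euc n), IsCube Q → ∀ E ⊆ Q, MeasurableSet E →
    wMeas u E * volume Q ^ δ ≤ ENNReal.ofReal C * (wMeas u Q * volume E ^ δ)

/-- `(|·|, v) ∈ C(δ)`. -/
def ComparLW {n : ℕ} (v : Euc n → ℝ) (δ : ℝ) : Prop :=
  ∃ C : ℝ, 0 < C ∧ ∀ Q : Set (Euc n), IsCube Q → ∀ E ⊆ Q, MeasurableSet E →
    volume E * wMeas v Q ^ δ ≤ ENNReal.ofReal C * (volume Q * wMeas v E ^ δ)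

/-- The class `N_Q(p,q)`. -/
def NQ {n : ℕ} (p q : ℝ) (u v : Euc n → ℝ) : Prop :=
  ∃ C : ℝ, 0 < C ∧ ∀ Q : Set (Euc n), IsCube Q → ∀ μ : Euc n, -μ ∈ Q → ∀ τ : Euc n,
    wMeas u Q ^ (1/q) * wMeas (wFun p v) (setTranslate τ (polarSet (setTranslate μ Q))) ^ (1 / rconj p)
        ≤ ENNReal.ofReal C ∧
    wMeas u (setTranslate τ (polarSet (setTranslate μ Q))) ^ (1/q) * wMeas (wFun p v) Q ^ (1 / rconj p)
        ≤ ENNReal.ofReal C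

/-- The class `N_{Q'}(p,q)`. -/
def NQ' {n : ℕ} (p q : ℝ) (u v : Euc n → ℝ) : Prop :=
  ∃ C : ℝ, 0 < C ∧ ∀ Q : Set (Euc n), IsCube Q → ∀ μ : Euc n, -μ ∈ Q → ∀ τ : Euc n,
    wMeas u Q ^ (1/q) * volume (polarSet Q)
        ≤ ENNReal.ofReal C * wMeas v (setTranslate τ (polarSet (setTranslate μ Q))) ^ (1/p) ∧
    wMeas u (setTranslate τ (polarSet (setTranslate μ Q))) ^ (1/q) * volume Q
        ≤ ENNReal.ofReal C * wMeas v Q ^ (1/p)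

/-- A rectanguloid centered at the origin. -/
def IsRectanguloid0 {n : ℕ} (R : Set (Euc n)) : Prop :=
  ∃ (b : OrthonormalBasis (Fin n) ℝ (Euc n)) (a : Fin n → ℝ),
    (∀ i, 0 < a i) ∧ R = {x | ∀ i, |(inner ℝ x (b i) : ℝ)| ≤ a i}

/-- An ellipsoid centered at the origin. -/
def IsEllipsoid0 {n : ℕ} (S : Set (Euc n)) : Prop :=
  ∃ T : Euc n ≃ₗ[ℝ] Euc n, S = ⇑T '' Metric.closedBall 0 1


-- translated polar sets are measurable
lemma measurable_tp {n : ℕ} (S : Set (Euc n)) (τ : Euc n) :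
    MeasurableSet (setTranslate τ (polarSet S)) := by
  have h1 : IsClosed (polarSet S) := by
    have : polarSet S = ⋂ x ∈ S, {z : Euc n | |(inner ℝ x z : ℝ)| ≤ 1} := by
      ext z; simp [polarSet]
    rw [this]
    refine isClosed_biInter fun x _ => ?_
    exact isClosed_le ((continuous_abs).comp ((continuous_const.inner continuous_id))) continuous_const
  have : setTranslate τ (polarSet S) = (Homeomorph.addRight τ) '' (polarSet S) := rfl
  rw [this]
  exact ((Homeomorph.addRight τ).isClosedMap _ h1).measurableSet

-- pointwise bound on the Fourier transform
lemma ftrans_bound {n : ℕ} {f : Euc n → ℂ} (hf : Integrable f) {A : Set (Euc n)}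
    (hA : MeasurableSet A) (hfA : ∀ᵐ x ∂(volume : Measure (Euc n)), x ∉ A → f x = 0)
    (z : Euc n) :
    (‖ftrans f z‖₊ : ℝ≥0∞) ≤ ∫⁻ x in A, (‖f x‖₊ : ℝ≥0∞) := by
  have h1 : ‖ftrans f z‖ ≤ ∫ x, ‖f x‖ := by
    calc ‖ftrans f z‖ ≤ ∫ x, ‖f x * Complex.exp (-(Complex.I * ((inner ℝ x z : ℝ) : ℂ)))‖ :=
          norm_integral_le_integral_norm _
      _ = ∫ x, ‖f x‖ := by
          refine integral_congr_ae (Filter.Eventually.of_forall fun x => ?_)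
          simp only [norm_mul]
          have : ‖Complex.exp (-(Complex.I * ((inner ℝ x z : ℝ) : ℂ)))‖ = 1 := by
            rw [Complex.norm_exp]
            simp
          rw [this, mul_one]
  have h2 : ENNReal.ofReal (∫ x, ‖f x‖) = ∫⁻ x, (‖f x‖₊ : ℝ≥0∞) :=
    by rw [ofReal_integral_norm_eq_lintegral_enorm hf]; rfl
  have h3 : (∫⁻ x, (‖f x‖₊ : ℝ≥0∞)) = ∫⁻ x in A, (‖f x‖₊ : ℝ≥0∞) := by
    rw [← lintegral_add_compl (fun x => (‖f x‖₊ : ℝ≥0∞)) hA]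
    have : ∫⁻ x in Aᶜ, (‖f x‖₊ : ℝ≥0∞) = 0 := by
      rw [lintegral_eq_zero_iff' (hf.aemeasurable.nnnorm.coe_nnreal_ennreal.restrict)]
      filter_upwards [ae_restrict_of_ae hfA, ae_restrict_mem hA.compl] with x hx hxc
      simp [hx hxc]
    rw [this, add_zero]
  calc (‖ftrans f z‖₊ : ℝ≥0∞) = ENNReal.ofReal ‖ftrans f z‖ := (ofReal_norm_eq_enorm _).symm
    _ ≤ ENNReal.ofReal (∫ x, ‖f x‖) := ENNReal.ofReal_le_ofReal h1
    _ = ∫⁻ x, (‖f x‖₊ : ℝ≥0∞) := h2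
    _ = ∫⁻ x in A, (‖f x‖₊ : ℝ≥0∞) := h3


section
lemma holder_step {n : ℕ} {p : ℝ} (hp : 1 < p) {v : Euc n → ℝ} (hvm : Measurable v)
    (hvpos : ∀ᵐ x ∂(volume : Measure (Euc n)), 0 < v x)
    {f : Euc n → ℂ} (hf : Integrable f) (A : Set (Euc n)) :
    (∫⁻ x in A, (‖f x‖₊ : ℝ≥0∞)) ≤
      (∫⁻ x in A, (‖f x‖₊ : ℝ≥0∞) ^ p * ENNReal.ofReal (v x)) ^ (1/p) *
        (wMeas (wFun p v) A) ^ (1 / rconj p) := by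
  have hp0 : p ≠ 0 := by positivity
  have hpq : p.HolderConjugate (rconj p) := Real.HolderConjugate.conjExponent hp
  set F : Euc n → ℝ≥0∞ := fun x => (‖f x‖₊ : ℝ≥0∞) * (ENNReal.ofReal (v x)) ^ (1/p) with hF
  set G : Euc n → ℝ≥0∞ := fun x => (ENNReal.ofReal (v x)) ^ (-(1/p)) with hG
  have step1 : (∫⁻ x in A, (‖f x‖₊ : ℝ≥0∞)) = ∫⁻ x in A, (F * G) x := by
    refine lintegral_congr_ae ?_
    filter_upwards [ae_restrict_of_ae hvpos] with x hx
    have h0 : ENNReal.ofReal (v x) ^ (1/p) ≠ 0 :=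
      (ENNReal.rpow_pos (ENNReal.ofReal_pos.2 hx) ENNReal.ofReal_ne_top).ne'
    have ht : ENNReal.ofReal (v x) ^ (1/p) ≠ ⊤ :=
      ENNReal.rpow_ne_top_of_nonneg (by positivity) ENNReal.ofReal_ne_top
    simp only [hF, hG, Pi.mul_apply]
    rw [ENNReal.rpow_neg, mul_assoc, ENNReal.mul_inv_cancel h0 ht, mul_one]
  have step2 := ENNReal.lintegral_mul_le_Lp_mul_Lq (f := F) (g := G) (volume.restrict A) hpq
    (((hf.aemeasurable.nnnorm.coe_nnreal_ennreal).restrict).mul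
      ((hvm.ennreal_ofReal.pow_const ((1:ℝ)/p)).aemeasurable.restrict))
    ((hvm.ennreal_ofReal.pow_const (-((1:ℝ)/p))).aemeasurable.restrict)
  have step3 : (∫⁻ x in A, F x ^ p) = ∫⁻ x in A, (‖f x‖₊ : ℝ≥0∞) ^ p * ENNReal.ofReal (v x) := by
    refine lintegral_congr fun x => ?_
    simp only [hF]
    rw [ENNReal.mul_rpow_of_nonneg _ _ (by positivity), ← ENNReal.rpow_mul,
      one_div_mul_cancel hp0, ENNReal.rpow_one]
  have step4 : (∫⁻ x in A, G x ^ (rconj p)) = wMeas (wFun p v) A := by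
    refine lintegral_congr_ae ?_
    filter_upwards [ae_restrict_of_ae hvpos] with x hx
    simp only [hG, wFun]
    rw [← ENNReal.rpow_mul, show -(1/p) * rconj p = -(rconj p)/p by ring,
      ENNReal.ofReal_rpow_of_pos hx]
  calc (∫⁻ x in A, (‖f x‖₊ : ℝ≥0∞)) = ∫⁻ x in A, (F * G) x := step1
    _ ≤ (∫⁻ x in A, F x ^ p) ^ (1/p) * (∫⁻ x in A, G x ^ (rconj p)) ^ (1 / rconj p) := step2
    _ = _ := by rw [step3, step4]

lemma key {n : ℕ} {p q : ℝ} (hp : 1 < p) (hq : 1 < q) {u v : Euc n → ℝ}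
    (hu : Measurable u) (hv : Measurable v)
    (hvpos : ∀ᵐ x ∂(volume : Measure (Euc n)), 0 < v x)
    {C : ℝ} {A B : Set (Euc n)} (hA : MeasurableSet A)
    (hAB : wMeas u B ^ (1/q) * wMeas (wFun p v) A ^ (1 / rconj p) ≤ ENNReal.ofReal C)
    (f : Euc n → ℂ) (hf : Integrable f)
    (hfA : ∀ᵐ x ∂(volume : Measure (Euc n)), x ∉ A → f x = 0) :
    (∫⁻ z in B, (‖ftrans f z‖₊ : ℝ≥0∞) ^ q * ENNReal.ofReal (u z)) ^ (1/q) ≤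
      ENNReal.ofReal C * (∫⁻ x in A, (‖f x‖₊ : ℝ≥0∞) ^ p * ENNReal.ofReal (v x)) ^ (1/p) := by
  have hq0 : (0:ℝ) < q := lt_trans one_pos hq
  set L := (∫⁻ x in A, (‖f x‖₊:ℝ≥0∞)^p * ENNReal.ofReal (v x)) ^ (1/p) with hL
  set W := wMeas (wFun p v) A ^ (1/rconj p) with hW
  have hM : ∀ z, (‖ftrans f z‖₊ : ℝ≥0∞) ≤ L * W :=
    fun z => (ftrans_bound hf hA hfA z).trans (holder_step hp hv hvpos hf A)
  have step : (∫⁻ z in B, (‖ftrans f z‖₊:ℝ≥0∞)^q * ENNReal.ofReal (u z))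
      ≤ (L*W)^q * wMeas u B := by
    rw [wMeas, ← lintegral_const_mul _ hu.ennreal_ofReal]
    exact lintegral_mono fun z =>
      mul_le_mul_left (ENNReal.rpow_le_rpow (hM z) hq0.le) _
  calc (∫⁻ z in B, (‖ftrans f z‖₊:ℝ≥0∞)^q * ENNReal.ofReal (u z)) ^ (1/q)
      ≤ ((L*W)^q * wMeas u B)^(1/q) := ENNReal.rpow_le_rpow step (by positivity)
    _ = (L*W) * wMeas u B ^ (1/q) := by
        rw [ENNReal.mul_rpow_of_nonneg _ _ (by positivity), ← ENNReal.rpow_mul,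
          mul_one_div_cancel hq0.ne', ENNReal.rpow_one]
    _ = (wMeas u B ^ (1/q) * W) * L := by ring
    _ ≤ ENNReal.ofReal C * L := mul_le_mul_left hAB L
end

theorem stmt4 (n : ℕ) (hn : 1 ≤ n) (p q : ℝ) (hp : 1 < p) (hq : 1 < q)
    (u v : Euc n → ℝ) (hu : IsWeight u) (hv : IsWeight v)
    (hvpos : ∀ᵐ x ∂(volume : Measure (Euc n)), 0 < v x)
    (C : ℝ) (hC : 0 < C)
    (hyp : ∀ E : Set (Euc n), IsBounded E → MeasurableSet E →
      ∀ μ : Euc n, -μ ∈ E → ∀ τ : Euc n,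
      wMeas u (setTranslate τ (polarSet (setTranslate μ E))) ^ (1/q) * wMeas (wFun p v) E ^ (1 / rconj p)
          ≤ ENNReal.ofReal C ∧
      wMeas u E ^ (1/q) * wMeas (wFun p v) (setTranslate τ (polarSet (setTranslate μ E))) ^ (1 / rconj p)
          ≤ ENNReal.ofReal C) :
    ∀ E : Set (Euc n), IsBounded E → MeasurableSet E →
      ∀ μ : Euc n, -μ ∈ E → ∀ τ : Euc n,
      (∀ f : Euc n → ℂ, Integrable f →
        (∀ᵐ x ∂(volume : Measure (Euc n)), x ∉ E → f x = 0) →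
        (∫⁻ z in setTranslate τ (polarSet (setTranslate μ E)),
            (‖ftrans f z‖₊ : ℝ≥0∞) ^ q * ENNReal.ofReal (u z)) ^ (1/q) ≤
          ENNReal.ofReal C *
            (∫⁻ x in E, (‖f x‖₊ : ℝ≥0∞) ^ p * ENNReal.ofReal (v x)) ^ (1/p)) ∧
      (∀ g : Euc n → ℂ, Integrable g →
        (∀ᵐ x ∂(volume : Measure (Euc n)), x ∉ setTranslate τ (polarSet (setTranslate μ E)) → g x = 0) →
        (∫⁻ z in E, (‖ftrans g z‖₊ : ℝ≥0∞) ^ q * ENNReal.ofReal (u z)) ^ (1/q) ≤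
          ENNReal.ofReal C *
            (∫⁻ x, (‖g x‖₊ : ℝ≥0∞) ^ p * ENNReal.ofReal (v x)) ^ (1/p)) := by
  
  intro E hEb hEm μ hμ τ
  obtain ⟨h1, h2⟩ := hyp E hEb hEm μ hμ τ
  constructor
  · intro f hf hfE
    exact key hp hq hu.1 hv.1 hvpos hEm h1 f hf hfE
  · intro g hg hgF
    have hFm := measurable_tp (setTranslate μ E) τ
    have hkey := key hp hq hu.1 hv.1 hvpos hFm h2 g hg hgF
    refine hkey.trans (mul_le_mul_right ?_ _)
    exact ENNReal.rpow_le_rpow (setLIntegral_le_lintegral _ _) (by positivity)
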